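/- arXiv:2201.04040 — 6 statements merged into one kernel-verified Lean document; each statement's English description precedes it below -/
import Mathlib

section
/- If f : ℝ^d → ℝ is L-smooth and μ-strongly convex (0 < μ ≤ L) with gradient ∇f, then for all x, y: f(x) ≥ f(y) + ⟪∇f(y), x - y⟫ + (1/(2L))‖∇f(x) - ∇f(y)‖² + (μL/(2(L-μ)))‖x - y - (1/L)(∇f(x) - ∇f(y))‖² (when μ < L). -/
open RealInnerProductSpace

theorem interpolation_necessity
    (d : ℕ) (μ L : ℝ) (hμ : 0 < μ) (hμL : μ < L)
    (f : EuclideanSpace ℝ (Fin d) → ℝ) (g : EuclideanSpace ℝ (Fin d) → EuclideanSpace ℝ (Fin d))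
    (hdiff : ∀ x, HasGradientAt f (g x) x)
    (hsmooth : ∀ x y, f x ≤ f y + ⟪g y, x - y⟫ + L / 2 * ‖x - y‖ ^ 2)
    (hsc : ∀ x y, f x ≥ f y + ⟪g y, x - y⟫ + μ / 2 * ‖x - y‖ ^ 2) :
    ∀ x y, f x ≥ f y + ⟪g y, x - y⟫ + 1 / (2 * L) * ‖g x - g y‖ ^ 2
      + μ * L / (2 * (L - μ)) * ‖x - y - (1 / L) • (g x - g y)‖ ^ 2 := by
  have hc : (0:ℝ) < L - μ := by linarith
  have hc' : L - μ ≠ 0 := ne_of_gt hc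
  have hL : (0:ℝ) < L := by linarith
  have hL' : L ≠ 0 := ne_of_gt hL
  -- the "convexified" function h p = f p - μ/2 ‖p‖² with gradient G p = g p - μ • p
  set G : EuclideanSpace ℝ (Fin d) → EuclideanSpace ℝ (Fin d) := fun p => g p - μ • p with hG
  have hGexp : ∀ p q : EuclideanSpace ℝ (Fin d),
      ⟪G q, p - q⟫ = ⟪g q, p - q⟫ - μ * ⟪q, p - q⟫ := by
    intro p q
    simp only [hG, inner_sub_left, real_inner_smul_left]
  have hnorm : ∀ p q : EuclideanSpace ℝ (Fin d),
      ‖p - q‖ ^ 2 = ‖p‖ ^ 2 - 2 * ⟪p, q⟫ + ‖q‖ ^ 2 := fun p q => norm_sub_sq_real p q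
  -- convexity of h
  have hconv : ∀ p q, f p - μ/2 * ‖p‖^2 ≥ (f q - μ/2 * ‖q‖^2) + ⟪G q, p - q⟫ := by
    intro p q
    have h0 := hsc p q
    have h1 := hGexp p q
    have h2 := hnorm p q
    have h3 : ⟪q, p - q⟫ = ⟪p, q⟫ - ‖q‖^2 := by
      rw [inner_sub_right, real_inner_comm, real_inner_self_eq_norm_sq]
    rw [h1, h3]
    nlinarith [h0, h2]
  -- (L - μ)-smoothness of h
  have hsm : ∀ p q, f p - μ/2 * ‖p‖^2
      ≤ (f q - μ/2 * ‖q‖^2) + ⟪G q, p - q⟫ + (L - μ)/2 * ‖p - q‖^2 := by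
    intro p q
    have h0 := hsmooth p q
    have h1 := hGexp p q
    have h2 := hnorm p q
    have h3 : ⟪q, p - q⟫ = ⟪p, q⟫ - ‖q‖^2 := by
      rw [inner_sub_right, real_inner_comm, real_inner_self_eq_norm_sq]
    rw [h1, h3]
    nlinarith [h0, h2]
  intro x y
  -- key inequality for convex (L-μ)-smooth h
  set v : EuclideanSpace ℝ (Fin d) := G x - G y with hv
  set z : EuclideanSpace ℝ (Fin d) := x - (1/(L-μ)) • v with hz
  have h1 := hconv z y
  have h2 := hsm z x
  have ezx : z - x = -((1/(L-μ)) • v) := by rw [hz]; abel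
  have ezy : z - y = (x - y) - (1/(L-μ)) • v := by rw [hz]; abel
  have i1 : ⟪G x, z - x⟫ = -(1/(L-μ)) * ⟪G x, v⟫ := by
    rw [ezx, inner_neg_right, real_inner_smul_right]; ring
  have i2 : ⟪G y, z - y⟫ = ⟪G y, x - y⟫ - (1/(L-μ)) * ⟪G y, v⟫ := by
    rw [ezy, inner_sub_right, real_inner_smul_right]
  have i3 : ‖z - x‖^2 = (1/(L-μ))^2 * ‖v‖^2 := by
    rw [ezx, norm_neg, norm_smul]
    rw [mul_pow, Real.norm_eq_abs, sq_abs]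
  have i4 : ⟪G x, v⟫ - ⟪G y, v⟫ = ‖v‖^2 := by
    rw [← inner_sub_left, ← hv, real_inner_self_eq_norm_sq]
  have key : f x - μ/2 * ‖x‖^2
      ≥ (f y - μ/2 * ‖y‖^2) + ⟪G y, x - y⟫ + 1/(2*(L-μ)) * ‖v‖^2 := by
    rw [i1] at h2
    rw [i2] at h1
    rw [i3] at h2
    have e5 : (L-μ)/2 * ((1/(L-μ))^2 * ‖v‖^2) = 1/(2*(L-μ)) * ‖v‖^2 := by
      field_simp
    have e6 : (1/(L-μ)) * ⟪G x, v⟫ - (1/(L-μ)) * ⟪G y, v⟫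
        = 1/(L-μ) * ‖v‖^2 := by rw [← mul_sub, i4]
    have e7 : 1/(L-μ) * ‖v‖^2 - 1/(2*(L-μ)) * ‖v‖^2 = 1/(2*(L-μ)) * ‖v‖^2 := by
      field_simp; ring
    linarith
  -- translate back to f
  have eGy : ⟪G y, x - y⟫ = ⟪g y, x - y⟫ - μ * ⟪y, x - y⟫ := hGexp x y
  have e1 : μ/2 * ‖x‖^2 - μ/2 * ‖y‖^2 - μ * ⟪y, x - y⟫ = μ/2 * ‖x - y‖^2 := by
    have h3 : ⟪y, x - y⟫ = ⟪x, y⟫ - ‖y‖^2 := by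
      rw [inner_sub_right, real_inner_comm, real_inner_self_eq_norm_sq]
    rw [h3, hnorm x y]; ring
  have hveq : v = (g x - g y) - μ • (x - y) := by
    rw [hv, hG]; simp only [smul_sub]; abel
  have e2 : 1/(2*(L-μ)) * ‖v‖^2 + μ/2 * ‖x - y‖^2
      = 1/(2*L) * ‖g x - g y‖^2
        + μ*L/(2*(L-μ)) * ‖x - y - (1/L) • (g x - g y)‖^2 := by
    have ev : ‖v‖^2 = ‖g x - g y‖^2 - 2*μ*⟪g x - g y, x - y⟫ + μ^2 * ‖x - y‖^2 := by
      rw [hveq, hnorm, real_inner_smul_right, norm_smul, mul_pow, Real.norm_eq_abs, sq_abs]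
      ring
    have ew : ‖x - y - (1/L) • (g x - g y)‖^2
        = ‖x - y‖^2 - 2*(1/L)*⟪g x - g y, x - y⟫ + (1/L)^2 * ‖g x - g y‖^2 := by
      rw [hnorm, real_inner_smul_right, norm_smul, mul_pow, Real.norm_eq_abs, sq_abs,
        real_inner_comm (x - y)]
      ring
    rw [ev, ew]
    set S : ℝ := ‖x - y‖^2
    set T : ℝ := ‖g x - g y‖^2
    set P : ℝ := ⟪g x - g y, x - y⟫
    field_simp
    ring
  rw [eGy] at key
  linarith [key, e1, e2]
end

section
/- Let f be L-smooth and μ-strongly convex with 0 < μ ≤ L, and γ > 0. If x₁ = x₀ - γ∇f(x₀) and y₁ = y₀ - γ∇f(y₀), then ‖x₁ - y₁‖² ≤ max{(1 - Lγ)², (1 - μγ)²} · ‖x₀ - y₀‖². -/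
open RealInnerProductSpace

set_option maxHeartbeats 1600000

lemma coco {d : ℕ} {L' : ℝ} (hL' : 0 < L')
    (F : EuclideanSpace ℝ (Fin d) → ℝ) (G : EuclideanSpace ℝ (Fin d) → EuclideanSpace ℝ (Fin d))
    (hconv : ∀ x y, F y + ⟪G y, x - y⟫ ≤ F x)
    (hsm : ∀ x y, F x ≤ F y + ⟪G y, x - y⟫ + L' / 2 * ‖x - y‖ ^ 2)
    (x y : EuclideanSpace ℝ (Fin d)) :
    (1 / L') * ‖G x - G y‖ ^ 2 ≤ ⟪G x - G y, x - y⟫ := by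
  have aux : ∀ p q, F q + ⟪G q, p - q⟫ + 1/(2*L') * ‖G p - G q‖^2 ≤ F p := by
    intro p q
    set u := G p - G q with hu
    set z := p - L'⁻¹ • u with hz
    have h1 := hconv z q
    have h2 := hsm z p
    have e1 : z - q = (p - q) - L'⁻¹ • u := by rw [hz]; abel
    have e2 : z - p = -(L'⁻¹ • u) := by rw [hz]; abel
    rw [e1] at h1
    rw [e2] at h2
    rw [inner_sub_right, real_inner_smul_right] at h1
    rw [inner_neg_right, real_inner_smul_right] at h2
    have e3 : ‖(-(L'⁻¹ • u) : EuclideanSpace ℝ (Fin d))‖^2 = L'⁻¹^2 * ‖u‖^2 := by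
      rw [norm_neg, norm_smul]
      simp [abs_of_pos (inv_pos.mpr hL'), mul_pow]
    rw [e3] at h2
    have e4 : ⟪G p, u⟫ - ⟪G q, u⟫ = ‖u‖^2 := by
      rw [← inner_sub_left, ← hu, real_inner_self_eq_norm_sq]
    have hL'' : L' ≠ 0 := ne_of_gt hL'
    have e4c : L'⁻¹ * inner ℝ (G p) u - L'⁻¹ * inner ℝ (G q) u = L'⁻¹ * ‖u‖^2 := by
      rw [← mul_sub, e4]
    have e8 : L' / 2 * (L'⁻¹ ^ 2 * ‖u‖ ^ 2) = 1/(2*L') * ‖u‖^2 := by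
      field_simp
    have e9 : L'⁻¹ * ‖u‖^2 - 1/(2*L') * ‖u‖^2 = 1/(2*L') * ‖u‖^2 := by
      field_simp; ring
    linarith [h1, h2]
  have a1 := aux x y
  have a2 := aux y x
  have e5 : ⟪G x, y - x⟫ = -⟪G x, x - y⟫ := by rw [← inner_neg_right]; congr 1; abel
  have e6 : ‖G y - G x‖ = ‖G x - G y‖ := by rw [← norm_neg]; congr 1; abel
  have e7 : ⟪G x - G y, x - y⟫ = ⟪G x, x - y⟫ - ⟪G y, x - y⟫ := inner_sub_left _ _ _
  rw [e5] at a2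
  rw [e6] at a2
  have e8 : 1/(2*L') * ‖G x - G y‖^2 + 1/(2*L') * ‖G x - G y‖^2 = 1/L' * ‖G x - G y‖^2 := by
    field_simp
    ring
  rw [e7]
  linarith [a1, a2]

theorem gd_one_step_contraction
    (d : ℕ) (μ L γ : ℝ) (hμ : 0 < μ) (hμL : μ ≤ L) (hγ : 0 < γ)
    (f : EuclideanSpace ℝ (Fin d) → ℝ) (g : EuclideanSpace ℝ (Fin d) → EuclideanSpace ℝ (Fin d))
    (hsmooth : ∀ x y, f x ≤ f y + ⟪g y, x - y⟫ + L / 2 * ‖x - y‖ ^ 2)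
    (hsc : ∀ x y, f x ≥ f y + ⟪g y, x - y⟫ + μ / 2 * ‖x - y‖ ^ 2)
    (x₀ y₀ x₁ y₁ : EuclideanSpace ℝ (Fin d))
    (hx : x₁ = x₀ - γ • g x₀) (hy : y₁ = y₀ - γ • g y₀) :
    ‖x₁ - y₁‖ ^ 2 ≤ max ((1 - L * γ) ^ 2) ((1 - μ * γ) ^ 2) * ‖x₀ - y₀‖ ^ 2 := by
  have hL : (0:ℝ) < L := lt_of_lt_of_le hμ hμL
  have hμLpos : (0:ℝ) < μ + L := by linarith
  set w : EuclideanSpace ℝ (Fin d) := x₀ - y₀ with hw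
  set h : EuclideanSpace ℝ (Fin d) := g x₀ - g y₀ with hh
  set s : ℝ := ‖w‖^2 with hs
  set a : ℝ := ⟪h, w⟫ with ha
  set b : ℝ := ‖h‖^2 with hb
  have hs0 : 0 ≤ s := sq_nonneg _
  have hb0 : 0 ≤ b := sq_nonneg _
  have idd : ∀ x y : EuclideanSpace ℝ (Fin d),
      ‖x‖^2 = ‖y‖^2 + 2*⟪y, x-y⟫ + ‖x-y‖^2 := by
    intro x y
    have h0 : y + (x - y) = x := by abel
    have h1 := norm_add_sq_real y (x - y)
    rw [h0] at h1
    linarith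
  have key : ‖x₁ - y₁‖^2 = s - 2*γ*a + γ^2*b := by
    have e : x₁ - y₁ = w - γ • h := by
      rw [hx, hy, hw, hh, smul_sub]; abel
    rw [e, norm_sub_sq_real, real_inner_smul_right, norm_smul]
    rw [(real_inner_comm w h).symm.trans ha.symm]
    simp only [Real.norm_eq_abs, abs_of_pos hγ, mul_pow, ← hb]
    ring
  have hconv : ∀ x y, f y + ⟪g y, x - y⟫ ≤ f x := by
    intro x y
    have h1 := hsc x y
    nlinarith [mul_nonneg hμ.le (sq_nonneg ‖x - y‖)]
  have hA : b ≤ L * a := by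
    have hc := coco hL f g hconv hsmooth x₀ y₀
    rw [← hh, ← hw, ← ha, ← hb] at hc
    rw [div_mul_eq_mul_div, one_mul, div_le_iff₀ hL] at hc
    linarith
  have hμs : μ * s ≤ a := by
    have h1 := hsc x₀ y₀
    have h2 := hsc y₀ x₀
    have e1 : ⟪g x₀, y₀ - x₀⟫ = -⟪g x₀, w⟫ := by
      rw [← inner_neg_right]; congr 1; rw [hw]; abel
    have e2 : ‖y₀ - x₀‖ = ‖w‖ := by
      rw [← norm_neg]; congr 1; rw [hw]; abel
    have e3 : a = ⟪g x₀, w⟫ - ⟪g y₀, w⟫ := by rw [ha, hh, inner_sub_left]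
    rw [e1, e2] at h2
    rw [← hw] at h1
    rw [hs]
    linarith
  have hCS : a^2 ≤ b * s := by
    have h1 := abs_real_inner_le_norm h w
    have h2 : a ≤ |a| := le_abs_self a
    have h3 : -a ≤ |a| := neg_le_abs a
    nlinarith [norm_nonneg h, norm_nonneg w]
  have hB : μ*L*s + b ≤ (μ+L)*a := by
    have hB' : ∀ ε : ℝ, 0 < ε → b - 2*μ*a + μ^2*s ≤ (L - μ + ε) * (a - μ*s) := by
      intro ε hε
      have hL' : (0:ℝ) < L - μ + ε := by linarith
      have hGinner : ∀ x y : EuclideanSpace ℝ (Fin d),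
          ⟪g y - μ • y, x - y⟫ = ⟪g y, x - y⟫ - μ * ⟪y, x - y⟫ := by
        intro x y
        rw [inner_sub_left, real_inner_smul_left]
      have hconvF : ∀ x y, (f y - μ/2 * ‖y‖^2) + ⟪g y - μ • y, x - y⟫ ≤ f x - μ/2 * ‖x‖^2 := by
        intro x y
        have h1 := hsc x y
        have h2 : μ/2 * ‖x‖^2 = μ/2 * ‖y‖^2 + μ * ⟪y, x-y⟫ + μ/2 * ‖x-y‖^2 := by
          rw [idd x y]; ring
        rw [hGinner]
        linarith
      have hsmF : ∀ x y, f x - μ/2 * ‖x‖^2 ≤ (f y - μ/2 * ‖y‖^2) + ⟪g y - μ • y, x - y⟫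
          + (L - μ + ε) / 2 * ‖x - y‖ ^ 2 := by
        intro x y
        have h1 := hsmooth x y
        have h2 : μ/2 * ‖x‖^2 = μ/2 * ‖y‖^2 + μ * ⟪y, x-y⟫ + μ/2 * ‖x-y‖^2 := by
          rw [idd x y]; ring
        have h3 : (L - μ + ε) / 2 * ‖x - y‖ ^ 2
            = L/2 * ‖x-y‖^2 - μ/2 * ‖x-y‖^2 + ε/2 * ‖x-y‖^2 := by ring
        have h4 : 0 ≤ ε/2 * ‖x-y‖^2 := by positivity
        rw [hGinner, h3]
        linarith
      have hc : (1 / (L - μ + ε)) * ‖(g x₀ - μ • x₀) - (g y₀ - μ • y₀)‖ ^ 2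
          ≤ ⟪(g x₀ - μ • x₀) - (g y₀ - μ • y₀), x₀ - y₀⟫ :=
        coco hL' (fun z => f z - μ/2 * ‖z‖^2) (fun z => g z - μ • z) hconvF hsmF x₀ y₀
      have eG : (g x₀ - μ • x₀) - (g y₀ - μ • y₀) = h - μ • w := by
        rw [hh, hw, smul_sub]; abel
      rw [eG] at hc
      have e1 : ⟪h - μ • w, x₀ - y₀⟫ = a - μ * s := by
        rw [← hw, inner_sub_left, real_inner_smul_left, ← ha, hs,
          real_inner_self_eq_norm_sq]
      have e2 : ‖h - μ • w‖^2 = b - 2*μ*a + μ^2*s := by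
        rw [norm_sub_sq_real, real_inner_smul_right, ha, norm_smul]
        simp only [Real.norm_eq_abs, abs_of_pos hμ, mul_pow, ← hb, ← hs]
        rw [real_inner_comm w h]
        ring
      rw [e1, e2] at hc
      rw [div_mul_eq_mul_div, one_mul, div_le_iff₀ hL'] at hc
      linarith
    have hams : 0 ≤ a - μ*s := sub_nonneg.mpr hμs
    have hlim : b - 2*μ*a + μ^2*s ≤ (L - μ) * (a - μ*s) := by
      rcases eq_or_lt_of_le hams with h0 | h0
      · have e := hB' 1 one_pos
        rw [← h0, mul_zero] at e ⊢
        linarith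
      · apply le_of_forall_pos_le_add
        intro ε hε
        have hne : a - μ*s ≠ 0 := ne_of_gt h0
        have h1 := hB' (ε / (a - μ*s)) (div_pos hε h0)
        have h2 : (L - μ + ε / (a - μ*s)) * (a - μ*s) = (L - μ) * (a - μ*s) + ε := by
          field_simp
          try ring
        linarith
    linarith
  rw [key]
  rcases le_total (γ * (μ + L)) 2 with hcase | hcase
  · have hmax : (1 - μ*γ)^2 ≤ max ((1 - L * γ) ^ 2) ((1 - μ * γ) ^ 2) := le_max_right _ _
    have hgoal : s - 2*γ*a + γ^2*b ≤ (1 - μ*γ)^2 * s := by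
      rcases eq_or_lt_of_le hs0 with h0 | h0
      · have ha2 : a^2 = 0 := le_antisymm (by rw [← h0] at hCS; linarith) (sq_nonneg a)
        have ha0 : a = 0 := by
          exact (pow_eq_zero_iff two_ne_zero).mp ha2
        have hLa : L * a = 0 := by rw [ha0]; ring
        have hb0' : b = 0 := le_antisymm (by linarith) hb0
        rw [← h0, ha0, hb0']
        norm_num
      · have hbμ : μ^2 * s ≤ b := by
          have h4 : 0 ≤ μ * s := mul_nonneg hμ.le hs0
          nlinarith [hCS, mul_nonneg (show (0:ℝ) ≤ a - μ*s by linarith)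
            (show (0:ℝ) ≤ a + μ*s by linarith)]
        nlinarith [mul_nonneg (mul_nonneg hγ.le (show (0:ℝ) ≤ 2 - γ*(μ+L) by linarith))
          (show (0:ℝ) ≤ b - μ^2*s by linarith),
          mul_le_mul_of_nonneg_left hB hγ.le, hμLpos]
    calc s - 2*γ*a + γ^2*b ≤ (1 - μ*γ)^2 * s := hgoal
      _ ≤ max ((1 - L * γ) ^ 2) ((1 - μ * γ) ^ 2) * s :=
        mul_le_mul_of_nonneg_right hmax hs0
  · have hmax : (1 - L*γ)^2 ≤ max ((1 - L * γ) ^ 2) ((1 - μ * γ) ^ 2) := le_max_left _ _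
    have hbL : b ≤ L^2 * s := by
      rcases eq_or_lt_of_le hb0 with h0 | h0
      · rw [← h0]; positivity
      · have hap : 0 < a := by nlinarith [hA, hL]
        nlinarith [mul_nonneg (sub_nonneg.mpr hA) (show (0:ℝ) ≤ L*a + b by nlinarith),
          mul_le_mul_of_nonneg_left hCS (sq_nonneg L), h0]
    have hgoal : s - 2*γ*a + γ^2*b ≤ (1 - L*γ)^2 * s := by
      nlinarith [mul_nonneg (mul_nonneg hγ.le (show (0:ℝ) ≤ γ*(μ+L) - 2 by linarith))
        (show (0:ℝ) ≤ L^2*s - b by linarith),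
        mul_le_mul_of_nonneg_left hB hγ.le, hμLpos]
    calc s - 2*γ*a + γ^2*b ≤ (1 - L*γ)^2 * s := hgoal
      _ ≤ max ((1 - L * γ) ^ 2) ((1 - μ * γ) ^ 2) * s :=
        mul_le_mul_of_nonneg_right hmax hs0
end

section
/- For 0 < μ ≤ L and γ = 2/(L+μ), the one-step gradient descent contraction factor equals ((L-μ)/(L+μ))², i.e., max{(1-Lγ)², (1-μγ)²} = ((L-μ)/(L+μ))², and this value of γ minimizes γ ↦ max{(1-Lγ)², (1-μγ)²} over γ ∈ ℝ. -/
theorem optimal_stepsize_contraction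
    (μ L : ℝ) (hμ : 0 < μ) (hμL : μ ≤ L) :
    max ((1 - L * (2 / (L + μ))) ^ 2) ((1 - μ * (2 / (L + μ))) ^ 2)
      = ((L - μ) / (L + μ)) ^ 2 ∧
    ∀ γ : ℝ, ((L - μ) / (L + μ)) ^ 2 ≤ max ((1 - L * γ) ^ 2) ((1 - μ * γ) ^ 2) := by
  have hs : 0 < L + μ := by linarith
  have hs' : L + μ ≠ 0 := ne_of_gt hs
  constructor
  · have h1 : 1 - L * (2 / (L + μ)) = -((L - μ) / (L + μ)) := by
      field_simp; ring
    have h2 : 1 - μ * (2 / (L + μ)) = (L - μ) / (L + μ) := by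
      field_simp; ring
    rw [h1, h2]; norm_num
  · intro γ
    have hnum : 0 ≤ L - μ := by linarith
    rcases le_total |1 - L * γ| |1 - μ * γ| with h | h
    · have hb : L - μ ≤ (L + μ) * |1 - μ * γ| := by
        have h1 : L * (1 - μ * γ) - μ * (1 - L * γ) = L - μ := by ring
        have h2 : L * (1 - μ * γ) ≤ L * |1 - μ * γ| :=
          mul_le_mul_of_nonneg_left (le_abs_self _) (by linarith)
        have h3 : -(μ * (1 - L * γ)) ≤ μ * |1 - μ * γ| := by
          have := (abs_le.mp (le_refl |1 - L * γ|)).1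
          have h4 : -(1 - L * γ) ≤ |1 - L * γ| := neg_le_abs _
          nlinarith [mul_le_mul_of_nonneg_left (h4.trans h) hμ.le]
        nlinarith
      have : (L - μ) / (L + μ) ≤ |1 - μ * γ| := by
        rw [div_le_iff₀ hs]; nlinarith
      calc ((L - μ) / (L + μ)) ^ 2 ≤ |1 - μ * γ| ^ 2 := by
            apply pow_le_pow_left₀ (by positivity) this
        _ = (1 - μ * γ) ^ 2 := sq_abs _
        _ ≤ _ := le_max_right _ _
    · have hb : L - μ ≤ (L + μ) * |1 - L * γ| := by
        have h3 : L * (1 - μ * γ) ≤ L * |1 - L * γ| :=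
          mul_le_mul_of_nonneg_left ((le_abs_self _).trans h) (by linarith)
        have h4 : -(1 - L * γ) ≤ |1 - L * γ| := neg_le_abs _
        nlinarith [mul_le_mul_of_nonneg_left h4 hμ.le]
      have : (L - μ) / (L + μ) ≤ |1 - L * γ| := by
        rw [div_le_iff₀ hs]; nlinarith
      calc ((L - μ) / (L + μ)) ^ 2 ≤ |1 - L * γ| ^ 2 := by
            apply pow_le_pow_left₀ (by positivity) this
        _ = (1 - L * γ) ^ 2 := sq_abs _
        _ ≤ _ := le_max_left _ _
end

section
/- Let f be L-smooth and convex with minimizer x⋆, and consider the accelerated gradient method with constant momentum for a μ-strongly convex, L-smooth f (0 < μ ≤ L): y₀ = x₀, x_{t+1} = y_t - (1/L)∇f(y_t), y_{t+1} = x_{t+1} + ((1-√(μ/L))/(1+√(μ/L)))(x_{t+1} - x_t). Then for all n, f(xₙ) - f(x⋆) ≤ (1 - √(μ/L))^n (f(x₀) - f(x⋆) + (μ/2)‖x₀ - x⋆‖²). -/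
open RealInnerProductSpace

set_option maxHeartbeats 1000000

theorem accelerated_gradient_rate
    (d : ℕ) (μ L : ℝ) (hμ : 0 < μ) (hμL : μ ≤ L)
    (f : EuclideanSpace ℝ (Fin d) → ℝ) (g : EuclideanSpace ℝ (Fin d) → EuclideanSpace ℝ (Fin d))
    (hsmooth : ∀ x y, f x ≤ f y + ⟪g y, x - y⟫ + L / 2 * ‖x - y‖ ^ 2)
    (hsc : ∀ x y, f x ≥ f y + ⟪g y, x - y⟫ + μ / 2 * ‖x - y‖ ^ 2)
    (xs : EuclideanSpace ℝ (Fin d)) (hstar : g xs = 0)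
    (x y : ℕ → EuclideanSpace ℝ (Fin d))
    (hy0 : y 0 = x 0)
    (hx : ∀ t, x (t + 1) = y t - (1 / L) • g (y t))
    (hy : ∀ t, y (t + 1) = x (t + 1)
      + ((1 - Real.sqrt (μ / L)) / (1 + Real.sqrt (μ / L))) • (x (t + 1) - x t)) :
    ∀ n, f (x n) - f xs
      ≤ (1 - Real.sqrt (μ / L)) ^ n * (f (x 0) - f xs + μ / 2 * ‖x 0 - xs‖ ^ 2) := by
  have hL : 0 < L := lt_of_lt_of_le hμ hμL
  set s : ℝ := Real.sqrt (μ / L) with hs_def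
  have hs_pos : 0 < s := Real.sqrt_pos.mpr (div_pos hμ hL)
  have hs_sq : s ^ 2 = μ / L := Real.sq_sqrt (le_of_lt (div_pos hμ hL))
  have hμ_eq : μ = L * s ^ 2 := by rw [hs_sq]; field_simp
  have hs_le : s ≤ 1 := by
    rw [show (1:ℝ) = Real.sqrt 1 by simp]
    exact Real.sqrt_le_sqrt (by rw [div_le_one hL]; exact hμL)
  have hs_ne : s ≠ 0 := ne_of_gt hs_pos
  have hL_ne : L ≠ 0 := ne_of_gt hL
  have hs1_ne : (1 : ℝ) + s ≠ 0 := by positivity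
  -- the auxiliary sequence
  set z : ℕ → EuclideanSpace ℝ (Fin d) := fun t => x t + ((1 + s) / s) • (y t - x t)
    with hz_def
  -- norm expansion lemma
  have expand : ∀ (a b G : EuclideanSpace ℝ (Fin d)) (c e : ℝ),
      ‖a + c • b + e • G‖ ^ 2
        = ‖a‖ ^ 2 + c ^ 2 * ‖b‖ ^ 2 + e ^ 2 * ‖G‖ ^ 2
          + 2 * c * ⟪a, b⟫ + 2 * e * ⟪a, G⟫ + 2 * (c * e) * ⟪b, G⟫ := by
    intro a b G c e
    rw [← real_inner_self_eq_norm_sq, ← real_inner_self_eq_norm_sq,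
      ← real_inner_self_eq_norm_sq, ← real_inner_self_eq_norm_sq]
    simp only [inner_add_left, inner_add_right, real_inner_smul_left, real_inner_smul_right,
      real_inner_comm b a, real_inner_comm G a, real_inner_comm G b]
    ring
  -- one-step potential decrease
  have step : ∀ t, f (x (t + 1)) - f xs + μ / 2 * ‖z (t + 1) - xs‖ ^ 2
      ≤ (1 - s) * (f (x t) - f xs + μ / 2 * ‖z t - xs‖ ^ 2) := by
    intro t
    set a : EuclideanSpace ℝ (Fin d) := y t - xs with ha_def
    set b : EuclideanSpace ℝ (Fin d) := y t - x t with hb_def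
    set G : EuclideanSpace ℝ (Fin d) := g (y t) with hG_def
    -- vector identities
    have hzt : z t - xs = a + (1 / s) • b + (0 : ℝ) • G := by
      simp only [hz_def, ha_def, hb_def]
      match_scalars <;> (field_simp; try ring)
    have hzt1 : z (t + 1) - xs = a + ((1 - s) / s) • b + (-(1 / (s * L))) • G := by
      simp only [hz_def, ha_def, hb_def, hG_def, hy t, hx t]
      match_scalars <;> (field_simp; try ring)
    have hxt1 : x (t + 1) - y t = (-(1 / L)) • G := by
      rw [hx t]; module
    -- three basic inequalities
    have hA : f (x (t + 1)) ≤ f (y t) - 1 / (2 * L) * ‖G‖ ^ 2 := by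
      have := hsmooth (x (t + 1)) (y t)
      rw [hxt1] at this
      rw [real_inner_smul_right, norm_smul] at this
      simp only [← hG_def, real_inner_self_eq_norm_sq] at this
      have hnn : ‖(-(1/L))‖ = 1 / L := by
        rw [norm_neg, Real.norm_eq_abs, abs_of_pos (by positivity)]
      rw [hnn] at this
      calc f (x (t + 1)) ≤ f (y t) + (-(1 / L)) * ‖G‖ ^ 2 + L / 2 * (1 / L * ‖G‖) ^ 2 := this
        _ = f (y t) - 1 / (2 * L) * ‖G‖ ^ 2 := by field_simp; ring
    have hB : f xs ≥ f (y t) - ⟪a, G⟫ + μ / 2 * ‖a‖ ^ 2 := by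
      have := hsc xs (y t)
      have hxsy : xs - y t = -a := by simp [ha_def]
      rw [hxsy] at this
      rw [inner_neg_right, norm_neg] at this
      rw [real_inner_comm] at this
      linarith [this]
    have hC : f (x t) ≥ f (y t) - ⟪b, G⟫ + μ / 2 * ‖b‖ ^ 2 := by
      have := hsc (x t) (y t)
      have hxy : x t - y t = -b := by simp [hb_def]
      rw [hxy] at this
      rw [inner_neg_right, norm_neg] at this
      rw [real_inner_comm] at this
      linarith [this]
    -- expand norms
    rw [hzt, hzt1, expand, expand]
    set A := ‖a‖ ^ 2
    set B := ‖b‖ ^ 2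
    set G2 := ‖G‖ ^ 2
    set p := ⟪a, G⟫
    set q := ⟪b, G⟫
    set r := ⟪a, b⟫
    have hBnn : 0 ≤ B := by positivity
    -- the exact identity
    have hident :
        (1 - s) * (f (x t) - f xs + μ / 2 * (A + (1/s)^2 * B + 0^2 * G2
            + 2 * (1/s) * r + 2 * 0 * p + 2 * ((1/s) * 0) * q))
        - (f (x (t + 1)) - f xs + μ / 2 * (A + ((1-s)/s)^2 * B + (-(1/(s*L)))^2 * G2
            + 2 * ((1-s)/s) * r + 2 * (-(1/(s*L))) * p + 2 * (((1-s)/s) * (-(1/(s*L)))) * q))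
        = (f (y t) - 1 / (2 * L) * G2 - f (x (t + 1)))
          + s * (f xs - (f (y t) - p + μ / 2 * A))
          + (1 - s) * (f (x t) - (f (y t) - q + μ / 2 * B))
          + L * s * (1 - s^2) / 2 * B := by
      rw [hμ_eq]
      field_simp
      ring
    have hterm : 0 ≤ L * s * (1 - s^2) / 2 * B := by
      apply mul_nonneg _ hBnn
      apply div_nonneg _ (by norm_num)
      apply mul_nonneg (by positivity)
      nlinarith [hs_le, hs_pos.le]
    have h1 : 0 ≤ f (y t) - 1 / (2 * L) * G2 - f (x (t + 1)) := by linarith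
    have h2 : 0 ≤ s * (f xs - (f (y t) - p + μ / 2 * A)) :=
      mul_nonneg hs_pos.le (by linarith)
    have h3 : 0 ≤ (1 - s) * (f (x t) - (f (y t) - q + μ / 2 * B)) :=
      mul_nonneg (by linarith) (by linarith)
    linarith [hident, h1, h2, h3, hterm]
  -- initial potential
  have hz0 : z 0 = x 0 := by
    simp [hz_def, hy0]
  -- induction
  have main : ∀ n, f (x n) - f xs + μ / 2 * ‖z n - xs‖ ^ 2
      ≤ (1 - s) ^ n * (f (x 0) - f xs + μ / 2 * ‖x 0 - xs‖ ^ 2) := by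
    intro n
    induction n with
    | zero => rw [hz0, pow_zero, one_mul]
    | succ k ih =>
      calc f (x (k + 1)) - f xs + μ / 2 * ‖z (k + 1) - xs‖ ^ 2
          ≤ (1 - s) * (f (x k) - f xs + μ / 2 * ‖z k - xs‖ ^ 2) := step k
        _ ≤ (1 - s) * ((1 - s) ^ k * (f (x 0) - f xs + μ / 2 * ‖x 0 - xs‖ ^ 2)) :=
            mul_le_mul_of_nonneg_left ih (by linarith)
        _ = (1 - s) ^ (k + 1) * (f (x 0) - f xs + μ / 2 * ‖x 0 - xs‖ ^ 2) := by ring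
  intro n
  have := main n
  have hnn : 0 ≤ μ / 2 * ‖z n - xs‖ ^ 2 := by positivity
  linarith
end

section
/- Sufficiency direction of interpolation for finite data with two points: let (x₁, g₁, f₁) and (x₂, g₂, f₂) with xᵢ, gᵢ ∈ ℝ^d, fᵢ ∈ ℝ, satisfy for both ordered pairs (i,j), i ≠ j: fᵢ ≥ fⱼ + ⟪gⱼ, xᵢ - xⱼ⟫ + (1/(2L))‖gᵢ - gⱼ‖² with L > 0 (the μ = 0 interpolation conditions). Then there exists a convex function F : ℝ^d → ℝ, differentiable with L-Lipschitz gradient, such that F(xᵢ) = fᵢ and ∇F(xᵢ) = gᵢ for i = 1, 2. -/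
open RealInnerProductSpace

noncomputable def psiAux (s u : ℝ) : ℝ := (max u 0 ^ 2 - max (u - 2*s) 0 ^ 2) / (4*s)

noncomputable def dpsiAux (s u : ℝ) : ℝ := min (max u 0) (2*s) / (2*s)

lemma hasDerivAt_sqmax (u : ℝ) : HasDerivAt (fun t : ℝ => max t 0 ^ 2) (2 * max u 0) u := by
  rcases lt_trichotomy u 0 with h | h | h
  · have hev : (fun t : ℝ => max t 0 ^ 2) =ᶠ[nhds u] fun _ => (0:ℝ) := by
      filter_upwards [Iio_mem_nhds h] with y hy
      have : y < 0 := hy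
      simp [max_eq_right this.le]
    rw [max_eq_right h.le, mul_zero]
    exact (hasDerivAt_const u (0:ℝ)).congr_of_eventuallyEq hev
  · subst h
    rw [max_self, mul_zero]
    rw [hasDerivAt_iff_tendsto_slope]
    have hbound : ∀ y : ℝ, ‖slope (fun t : ℝ => max t 0 ^ 2) 0 y‖ ≤ |y| := by
      intro y
      have h1 : max y 0 ^ 2 ≤ y ^ 2 := by
        rcases le_total y 0 with hy | hy
        · rw [max_eq_right hy]; simpa using sq_nonneg y
        · rw [max_eq_left hy]
      have hsl : slope (fun t : ℝ => max t 0 ^ 2) 0 y = max y 0 ^ 2 / y := by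
        simp [slope_def_field, div_eq_mul_inv]
      rw [hsl, Real.norm_eq_abs]
      rcases eq_or_ne y 0 with rfl | hy
      · simp
      · rw [abs_div, div_le_iff₀ (abs_pos.mpr hy)]
        calc |max y 0 ^ 2| = max y 0 ^ 2 := abs_of_nonneg (by positivity)
          _ ≤ y ^ 2 := h1
          _ = |y| * |y| := by rw [← abs_mul, ← sq, abs_of_nonneg (sq_nonneg y)]
    have htend : Filter.Tendsto (fun y : ℝ => |y|) (nhdsWithin 0 {(0:ℝ)}ᶜ) (nhds 0) := by
      have : Filter.Tendsto (fun y : ℝ => |y|) (nhds 0) (nhds 0) := by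
        simpa using continuous_abs.tendsto (0:ℝ)
      exact this.mono_left nhdsWithin_le_nhds
    exact squeeze_zero_norm hbound htend
  · have hev : (fun t : ℝ => max t 0 ^ 2) =ᶠ[nhds u] fun t => t ^ 2 := by
      filter_upwards [Ioi_mem_nhds h] with y hy
      have : (0:ℝ) < y := hy
      simp [max_eq_left this.le]
    rw [max_eq_left h.le]
    have h2 : HasDerivAt (fun t : ℝ => t ^ 2) (2 * u) u := by
      simpa using (hasDerivAt_pow 2 u)
    exact h2.congr_of_eventuallyEq hev

lemma clamp_eq {s : ℝ} (hs : 0 < s) (u : ℝ) :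
    max u 0 - max (u - 2*s) 0 = min (max u 0) (2*s) := by
  rcases le_total u (2*s) with h | h
  · rw [show max (u - 2*s) 0 = 0 from max_eq_right (by linarith),
      show min (max u 0) (2*s) = max u 0 from min_eq_left (max_le h (by linarith))]
    ring
  · rw [show max (u - 2*s) 0 = u - 2*s from max_eq_left (by linarith),
      show max u 0 = u from max_eq_left (by linarith),
      show min u (2*s) = 2*s from min_eq_right (by linarith)]
    ring

lemma hasDerivAt_psiAux {s : ℝ} (hs : 0 < s) (u : ℝ) :
    HasDerivAt (psiAux s) (dpsiAux s u) u := by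
  have h1 := hasDerivAt_sqmax u
  have h2 : HasDerivAt (fun t : ℝ => max (t - 2*s) 0 ^ 2) (2 * max (u - 2*s) 0) u := by
    have := (hasDerivAt_sqmax (u - 2*s)).comp u ((hasDerivAt_id u).sub_const (2*s))
    rw [mul_one] at this
    exact this
  have h3 := (h1.sub h2).div_const (4*s)
  have heq : (2 * max u 0 - 2 * max (u - 2*s) 0) / (4*s) = dpsiAux s u := by
    rw [dpsiAux, ← clamp_eq hs u]
    field_simp
    ring
  rw [heq] at h3
  exact h3

lemma psiAux_of_nonpos {s : ℝ} (hs : 0 < s) {u : ℝ} (hu : u ≤ 0) : psiAux s u = 0 := by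
  rw [psiAux, show max (u - 2*s) 0 = 0 from max_eq_right (by linarith),
    show max u 0 = 0 from max_eq_right hu]
  simp

lemma psiAux_of_ge {s : ℝ} (hs : 0 < s) {u : ℝ} (hu : 2*s ≤ u) : psiAux s u = u - s := by
  rw [psiAux, show max (u - 2*s) 0 = u - 2*s from max_eq_left (by linarith),
    show max u 0 = u from max_eq_left (by linarith)]
  field_simp
  ring

lemma dpsiAux_of_nonpos {s : ℝ} (hs : 0 < s) {u : ℝ} (hu : u ≤ 0) : dpsiAux s u = 0 := by
  rw [dpsiAux, show max u 0 = 0 from max_eq_right hu,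
    show min (0:ℝ) (2*s) = 0 from min_eq_left (by linarith)]
  simp

lemma dpsiAux_of_ge {s : ℝ} (hs : 0 < s) {u : ℝ} (hu : 2*s ≤ u) : dpsiAux s u = 1 := by
  rw [dpsiAux, show max u 0 = u from max_eq_left (by linarith),
    show min u (2*s) = 2*s from min_eq_right hu]
  field_simp

lemma dpsiAux_lipschitz {s : ℝ} (hs : 0 < s) (a b : ℝ) :
    |dpsiAux s a - dpsiAux s b| ≤ |a - b| / (2*s) := by
  rw [dpsiAux, dpsiAux, div_sub_div_same, abs_div, abs_of_pos (by linarith : (0:ℝ) < 2*s)]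
  apply div_le_div_of_nonneg_right ?_ (by linarith)
  calc |min (max a 0) (2*s) - min (max b 0) (2*s)|
      ≤ max |max a 0 - max b 0| |2*s - 2*s| := abs_min_sub_min_le_max _ _ _ _
    _ = |max a 0 - max b 0| := by simp
    _ ≤ |a - b| := abs_max_sub_max_le_abs _ _ _

lemma psiAux_convex {s : ℝ} (hs : 0 < s) : ConvexOn ℝ Set.univ (psiAux s) := by
  have hdiff : Differentiable ℝ (psiAux s) := fun u => (hasDerivAt_psiAux hs u).differentiableAt
  have hderiv : deriv (psiAux s) = dpsiAux s := funext fun u => (hasDerivAt_psiAux hs u).deriv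
  apply Monotone.convexOn_univ_of_deriv hdiff
  rw [hderiv]
  have hmono : Monotone (fun u : ℝ => min (max u 0) (2*s)) :=
    (monotone_id.max monotone_const).min monotone_const
  exact hmono.div_const (by linarith)

section Grad

variable {E : Type*} [NormedAddCommGroup E] [InnerProductSpace ℝ E] [CompleteSpace E]

lemma hasFDerivAt_inner_sub (g x₀ x : E) :
    HasFDerivAt (fun y : E => ⟪g, y - x₀⟫) (InnerProductSpace.toDual ℝ E g : E →L[ℝ] ℝ) x := by
  have heq : (fun y : E => ⟪g, y - x₀⟫) =
      fun y : E => (InnerProductSpace.toDual ℝ E g : E →L[ℝ] ℝ) y - ⟪g, x₀⟫ := by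
    funext y
    simp [inner_sub_right, InnerProductSpace.toDual_apply_apply]
  rw [heq]
  exact ((InnerProductSpace.toDual ℝ E g : E →L[ℝ] ℝ).hasFDerivAt).sub_const _

omit [CompleteSpace E] in
lemma convexOn_affine (c : ℝ) (g x₀ : E) :
    ConvexOn ℝ Set.univ (fun y : E => c + ⟪g, y - x₀⟫) := by
  refine ⟨convex_univ, fun p _ q _ a b ha hb hab => ?_⟩
  simp only [smul_eq_mul, inner_sub_right, inner_add_right, real_inner_smul_right]
  linear_combination (c - ⟪g, x₀⟫) * hab.symm

end Grad

theorem two_point_smooth_convex_interpolation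
    (d : ℕ) (L : ℝ) (hL : 0 < L)
    (x₁ x₂ g₁ g₂ : EuclideanSpace ℝ (Fin d)) (f₁ f₂ : ℝ)
    (h12 : f₁ ≥ f₂ + ⟪g₂, x₁ - x₂⟫ + 1 / (2 * L) * ‖g₁ - g₂‖ ^ 2)
    (h21 : f₂ ≥ f₁ + ⟪g₁, x₂ - x₁⟫ + 1 / (2 * L) * ‖g₂ - g₁‖ ^ 2) :
    ∃ (F : EuclideanSpace ℝ (Fin d) → ℝ)
      (gF : EuclideanSpace ℝ (Fin d) → EuclideanSpace ℝ (Fin d)),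
      ConvexOn ℝ Set.univ F ∧
      (∀ x, HasGradientAt F (gF x) x) ∧
      (∀ x y, ‖gF x - gF y‖ ≤ L * ‖x - y‖) ∧
      F x₁ = f₁ ∧ F x₂ = f₂ ∧ gF x₁ = g₁ ∧ gF x₂ = g₂ := by
  have hL' : L ≠ 0 := ne_of_gt hL
  have hA : ⟪g₂, x₁ - x₂⟫ = -⟪g₂, x₂ - x₁⟫ := by
    rw [show x₁ - x₂ = -(x₂ - x₁) by abel, inner_neg_right]
  by_cases hv0 : g₂ = g₁
  · -- degenerate affine case
    subst hv0
    have hval : f₂ = f₁ + ⟪g₂, x₂ - x₁⟫ := by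
      simp only [sub_self, norm_zero] at h12 h21
      rw [hA] at h12
      have h12' : f₁ ≥ f₂ + -⟪g₂, x₂ - x₁⟫ + 1/(2*L) * 0^2 := h12
      have h21' : f₂ ≥ f₁ + ⟪g₂, x₂ - x₁⟫ + 1/(2*L) * 0^2 := h21
      simp only [ne_eq, OfNat.ofNat_ne_zero, not_false_eq_true, zero_pow, mul_zero] at h12' h21'
      linarith
    refine ⟨fun y => f₁ + ⟪g₂, y - x₁⟫, fun _ => g₂, convexOn_affine f₁ g₂ x₁,
      ?_, ?_, ?_, ?_, rfl, rfl⟩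
    · intro x
      exact (hasFDerivAt_inner_sub g₂ x₁ x).const_add f₁
    · intro x y; simp; positivity
    · simp
    · simp [hval]
  · -- main case
    have hvne : g₂ - g₁ ≠ 0 := sub_ne_zero.mpr hv0
    have hvpos : (0:ℝ) < ‖g₂ - g₁‖ := norm_pos_iff.mpr hvne
    obtain ⟨s, hs_def⟩ : ∃ s : ℝ, s = ‖g₂ - g₁‖^2 / (2*L) := ⟨_, rfl⟩
    have hs : 0 < s := by rw [hs_def]; positivity
    obtain ⟨β₁, hβ₁_def⟩ : ∃ b : ℝ, b = f₂ + ⟪g₂, x₁ - x₂⟫ + 1/(2*L) * ‖g₁ - g₂‖^2 - f₁ :=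
      ⟨_, rfl⟩
    have hβ1 : β₁ ≤ 0 := by rw [hβ₁_def]; linarith
    have hnrev : ‖g₁ - g₂‖ = ‖g₂ - g₁‖ := norm_sub_rev g₁ g₂
    have hβ2 : 2*s ≤ ⟪g₂ - g₁, x₂ - x₁⟫ + β₁ := by
      have hexp : ⟪g₂ - g₁, x₂ - x₁⟫ + β₁ - 2*s
          = f₂ - (f₁ + ⟪g₁, x₂ - x₁⟫ + 1/(2*L) * ‖g₂ - g₁‖^2) := by
        rw [hβ₁_def, hs_def, inner_sub_left, hA, hnrev]
        field_simp
        ring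
      linarith
    have hval : f₁ + ⟪g₁, x₂ - x₁⟫ + (⟪g₂ - g₁, x₂ - x₁⟫ + β₁ - s) = f₂ := by
      rw [hβ₁_def, hs_def, inner_sub_left, hA, hnrev]
      field_simp
      ring
    refine ⟨fun y => (f₁ + ⟪g₁, y - x₁⟫) + psiAux s (⟪g₂ - g₁, y - x₁⟫ + β₁),
      fun y => g₁ + dpsiAux s (⟪g₂ - g₁, y - x₁⟫ + β₁) • (g₂ - g₁), ?_, ?_, ?_, ?_, ?_, ?_, ?_⟩
    · -- convexity
      refine ⟨convex_univ, fun p _ q _ a b ha hb hab => ?_⟩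
      have hβlin : ⟪g₂ - g₁, (a • p + b • q) - x₁⟫ + β₁
          = a * (⟪g₂ - g₁, p - x₁⟫ + β₁) + b * (⟪g₂ - g₁, q - x₁⟫ + β₁) := by
        simp only [inner_sub_right, inner_add_right, real_inner_smul_right]
        linear_combination (β₁ - ⟪g₂ - g₁, x₁⟫) * hab.symm
      have hψ := (psiAux_convex hs).2 (Set.mem_univ (⟪g₂ - g₁, p - x₁⟫ + β₁))
        (Set.mem_univ (⟪g₂ - g₁, q - x₁⟫ + β₁)) ha hb hab
      simp only [smul_eq_mul] at hψ ⊢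
      rw [hβlin]
      have haffeq : f₁ + ⟪g₁, (a • p + b • q) - x₁⟫
          = a * (f₁ + ⟪g₁, p - x₁⟫) + b * (f₁ + ⟪g₁, q - x₁⟫) := by
        simp only [inner_sub_right, inner_add_right, real_inner_smul_right]
        linear_combination (f₁ - ⟪g₁, x₁⟫) * hab.symm
      rw [haffeq]
      linarith
    · -- gradient
      intro x
      show HasFDerivAt _
        (InnerProductSpace.toDual ℝ (EuclideanSpace ℝ (Fin d))
          (g₁ + dpsiAux s (⟪g₂ - g₁, x - x₁⟫ + β₁) • (g₂ - g₁))) x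
      have haff : HasFDerivAt (fun y : EuclideanSpace ℝ (Fin d) => f₁ + ⟪g₁, y - x₁⟫)
          (InnerProductSpace.toDual ℝ (EuclideanSpace ℝ (Fin d)) g₁ :
            EuclideanSpace ℝ (Fin d) →L[ℝ] ℝ) x :=
        (hasFDerivAt_inner_sub g₁ x₁ x).const_add f₁
      have hβd : HasFDerivAt (fun y : EuclideanSpace ℝ (Fin d) => ⟪g₂ - g₁, y - x₁⟫ + β₁)
          (InnerProductSpace.toDual ℝ (EuclideanSpace ℝ (Fin d)) (g₂ - g₁) :
            EuclideanSpace ℝ (Fin d) →L[ℝ] ℝ) x :=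
        (hasFDerivAt_inner_sub (g₂ - g₁) x₁ x).add_const β₁
      have hψd : HasDerivAt (psiAux s) (dpsiAux s (⟪g₂ - g₁, x - x₁⟫ + β₁))
        (⟪g₂ - g₁, x - x₁⟫ + β₁) := hasDerivAt_psiAux hs _
      have hcomp := hψd.comp_hasFDerivAt x hβd
      have htot := haff.add hcomp
      have heq : (InnerProductSpace.toDual ℝ (EuclideanSpace ℝ (Fin d))
            (g₁ + dpsiAux s (⟪g₂ - g₁, x - x₁⟫ + β₁) • (g₂ - g₁)) :
            EuclideanSpace ℝ (Fin d) →L[ℝ] ℝ)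
          = (InnerProductSpace.toDual ℝ (EuclideanSpace ℝ (Fin d)) g₁ :
              EuclideanSpace ℝ (Fin d) →L[ℝ] ℝ)
            + dpsiAux s (⟪g₂ - g₁, x - x₁⟫ + β₁) •
              (InnerProductSpace.toDual ℝ (EuclideanSpace ℝ (Fin d)) (g₂ - g₁) :
                EuclideanSpace ℝ (Fin d) →L[ℝ] ℝ) := by
        ext y
        simp [InnerProductSpace.toDual_apply_apply, inner_add_left, real_inner_smul_left]
      rw [heq]
      exact htot
    · -- Lipschitz
      intro x y
      have hdiff : g₁ + dpsiAux s (⟪g₂ - g₁, x - x₁⟫ + β₁) • (g₂ - g₁)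
            - (g₁ + dpsiAux s (⟪g₂ - g₁, y - x₁⟫ + β₁) • (g₂ - g₁))
          = (dpsiAux s (⟪g₂ - g₁, x - x₁⟫ + β₁) - dpsiAux s (⟪g₂ - g₁, y - x₁⟫ + β₁))
              • (g₂ - g₁) := by
        rw [sub_smul]; abel
      rw [hdiff, norm_smul, Real.norm_eq_abs]
      have hlip := dpsiAux_lipschitz hs (⟪g₂ - g₁, x - x₁⟫ + β₁) (⟪g₂ - g₁, y - x₁⟫ + β₁)
      have hβsub : (⟪g₂ - g₁, x - x₁⟫ + β₁) - (⟪g₂ - g₁, y - x₁⟫ + β₁) = ⟪g₂ - g₁, x - y⟫ := by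
        simp only [inner_sub_right]
        ring
      have hcs : |⟪g₂ - g₁, x - y⟫| ≤ ‖g₂ - g₁‖ * ‖x - y‖ := abs_real_inner_le_norm _ _
      calc |dpsiAux s (⟪g₂ - g₁, x - x₁⟫ + β₁) - dpsiAux s (⟪g₂ - g₁, y - x₁⟫ + β₁)| * ‖g₂ - g₁‖
          ≤ (|(⟪g₂ - g₁, x - x₁⟫ + β₁) - (⟪g₂ - g₁, y - x₁⟫ + β₁)| / (2*s)) * ‖g₂ - g₁‖ :=
            mul_le_mul_of_nonneg_right hlip (norm_nonneg _)
        _ ≤ ((‖g₂ - g₁‖ * ‖x - y‖) / (2*s)) * ‖g₂ - g₁‖ := by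
            refine mul_le_mul_of_nonneg_right ?_ (norm_nonneg _)
            refine div_le_div_of_nonneg_right ?_ (by linarith)
            rw [hβsub]; exact hcs
        _ = L * ‖x - y‖ := by
            rw [hs_def]
            field_simp
    · -- F x₁
      show (f₁ + ⟪g₁, x₁ - x₁⟫) + psiAux s (⟪g₂ - g₁, x₁ - x₁⟫ + β₁) = f₁
      have hb : ⟪g₂ - g₁, x₁ - x₁⟫ + β₁ = β₁ := by simp
      rw [hb, psiAux_of_nonpos hs hβ1]
      simp
    · -- F x₂
      show (f₁ + ⟪g₁, x₂ - x₁⟫) + psiAux s (⟪g₂ - g₁, x₂ - x₁⟫ + β₁) = f₂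
      rw [psiAux_of_ge hs hβ2]
      linarith
    · -- gF x₁
      show g₁ + dpsiAux s (⟪g₂ - g₁, x₁ - x₁⟫ + β₁) • (g₂ - g₁) = g₁
      have hb : ⟪g₂ - g₁, x₁ - x₁⟫ + β₁ = β₁ := by simp
      rw [hb, dpsiAux_of_nonpos hs hβ1, zero_smul, add_zero]
    · -- gF x₂
      show g₁ + dpsiAux s (⟪g₂ - g₁, x₂ - x₁⟫ + β₁) • (g₂ - g₁) = g₂
      rw [dpsiAux_of_ge hs hβ2, one_smul]
      abel
end

section
/- Let f be L-smooth and convex with minimizer x⋆ and let (xₖ) be generated by gradient descent with step-size γ = 1/L: xₖ₊₁ = xₖ - (1/L)∇f(xₖ). Then the quantities φₖ = k(f(xₖ) - f(x⋆)) + (L/2)‖xₖ - x⋆‖² satisfy φₖ₊₁ ≤ φₖ for all k ≥ 0, and consequently f(xₙ) - f(x⋆) ≤ (L/(2n))‖x₀ - x⋆‖² for all n ≥ 1. -/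
open RealInnerProductSpace

theorem gd_potential_function
    (d : ℕ) (L : ℝ) (hL : 0 < L)
    (f : EuclideanSpace ℝ (Fin d) → ℝ) (g : EuclideanSpace ℝ (Fin d) → EuclideanSpace ℝ (Fin d))
    (hconv : ∀ x y, f x ≥ f y + ⟪g y, x - y⟫)
    (hsmooth : ∀ x y, f x ≤ f y + ⟪g y, x - y⟫ + L / 2 * ‖x - y‖ ^ 2)
    (xs : EuclideanSpace ℝ (Fin d)) (hstar : g xs = 0)
    (x : ℕ → EuclideanSpace ℝ (Fin d))
    (hx : ∀ k, x (k + 1) = x k - (1 / L) • g (x k)) :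
    (∀ k : ℕ, (k + 1 : ℝ) * (f (x (k + 1)) - f xs) + L / 2 * ‖x (k + 1) - xs‖ ^ 2
        ≤ (k : ℝ) * (f (x k) - f xs) + L / 2 * ‖x k - xs‖ ^ 2) ∧
    ∀ n : ℕ, 1 ≤ n → f (x n) - f xs ≤ L / (2 * n) * ‖x 0 - xs‖ ^ 2 := by
  have hstep : ∀ k : ℕ, (k + 1 : ℝ) * (f (x (k + 1)) - f xs) + L / 2 * ‖x (k + 1) - xs‖ ^ 2
      ≤ (k : ℝ) * (f (x k) - f xs) + L / 2 * ‖x k - xs‖ ^ 2 := by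
    intro k
    set gk := g (x k) with hgk
    set a := x k - xs with ha
    have hx1 : x (k + 1) - xs = a - (1 / L) • gk := by
      rw [hx k, ha, sub_right_comm]
    have hx2 : x (k + 1) - x k = -((1 / L) • gk) := by
      rw [hx k]; abel
    have hnorm1 : ‖x (k + 1) - xs‖ ^ 2
        = ‖a‖ ^ 2 - 2 * ((1 / L) * ⟪a, gk⟫) + (1 / L) ^ 2 * ‖gk‖ ^ 2 := by
      rw [hx1, norm_sub_sq_real, real_inner_smul_right, norm_smul]
      rw [Real.norm_eq_abs, abs_of_pos (by positivity : (0:ℝ) < 1 / L)]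
      ring
    have hnorm2 : ‖x (k + 1) - x k‖ ^ 2 = (1 / L) ^ 2 * ‖gk‖ ^ 2 := by
      rw [hx2, norm_neg, norm_smul, Real.norm_eq_abs,
        abs_of_pos (by positivity : (0:ℝ) < 1 / L)]
      ring
    have hinner2 : ⟪gk, x (k + 1) - x k⟫ = -((1 / L) * ‖gk‖ ^ 2) := by
      rw [hx2, inner_neg_right, real_inner_smul_right, real_inner_self_eq_norm_sq]
    have hsm := hsmooth (x (k + 1)) (x k)
    rw [hinner2, hnorm2] at hsm
    have hcv := hconv xs (x k)
    have hna : xs - x k = -a := by rw [ha]; abel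
    have hinner3 : ⟪gk, xs - x k⟫ = -⟪a, gk⟫ := by
      rw [hna, inner_neg_right, real_inner_comm]
    rw [hinner3] at hcv
    have hk0 : (0:ℝ) ≤ (k : ℝ) := Nat.cast_nonneg k
    have hsm' : f (x (k + 1)) ≤ f (x k) - 1 / (2 * L) * ‖gk‖ ^ 2 := by
      have e : -(1 / L * ‖gk‖ ^ 2) + L / 2 * ((1 / L) ^ 2 * ‖gk‖ ^ 2)
          = -(1 / (2 * L) * ‖gk‖ ^ 2) := by field_simp; ring
      linarith [hsm, e]
    have e2 : L / 2 * (‖a‖ ^ 2 - 2 * (1 / L * ⟪a, gk⟫) + (1 / L) ^ 2 * ‖gk‖ ^ 2)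
        = L / 2 * ‖a‖ ^ 2 - ⟪a, gk⟫ + 1 / (2 * L) * ‖gk‖ ^ 2 := by field_simp
    rw [hnorm1, e2]
    have h2 : (0:ℝ) ≤ (k : ℝ) * (1 / (2 * L) * ‖gk‖ ^ 2) := by positivity
    nlinarith [mul_le_mul_of_nonneg_left hsm' (by positivity : (0:ℝ) ≤ (k:ℝ) + 1), h2]
  constructor
  · exact hstep
  · intro n hn
    have hmono : ∀ n : ℕ, (n : ℝ) * (f (x n) - f xs) + L / 2 * ‖x n - xs‖ ^ 2
        ≤ L / 2 * ‖x 0 - xs‖ ^ 2 := by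
      intro n
      induction n with
      | zero => simp
      | succ m ih =>
        calc ((m + 1 : ℕ) : ℝ) * (f (x (m + 1)) - f xs) + L / 2 * ‖x (m + 1) - xs‖ ^ 2
            ≤ (m : ℝ) * (f (x m) - f xs) + L / 2 * ‖x m - xs‖ ^ 2 := by
              have := hstep m; push_cast; push_cast at this; linarith
          _ ≤ L / 2 * ‖x 0 - xs‖ ^ 2 := ih
    have h1 := hmono n
    have hn0 : (0:ℝ) < (n : ℝ) := by exact_mod_cast hn
    have hnormpos : (0:ℝ) ≤ L / 2 * ‖x n - xs‖ ^ 2 := by positivity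
    rw [div_mul_eq_mul_div, le_div_iff₀ (by positivity : (0:ℝ) < 2 * n)]
    nlinarith
end
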